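/- Let n ≥ 2 and let T be a maximal torus of SL_n(ℂ), i.e., T = g·D·g⁻¹ for some g ∈ SL_n(ℂ), where D is the subgroup of diagonal matrices of determinant 1. Then there exist α₁, α₂ ∈ SL_n(ℂ) such that the set T · (α₁ T α₁⁻¹) · (α₂ T α₂⁻¹) = {t₁ · (α₁ t₂ α₁⁻¹) · (α₂ t₃ α₂⁻¹) : t₁, t₂, t₃ ∈ T} spans Mat_n(ℂ) as a ℂ-vector space. -/

import Mathlib

open Matrix

private lemma sbm_mul_sbm {n : ℕ} (i j k l : Fin n) (c d : ℂ) (M : Matrix (Fin n) (Fin n) ℂ) :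
    Matrix.single i j c * M * Matrix.single k l d = Matrix.single i l (c * M j k * d) := by
  ext a b
  rcases eq_or_ne a i with rfl | ha
  · rcases eq_or_ne b l with rfl | hb
    · simp
    · simp [hb, (Ne.symm hb)]
  · rcases eq_or_ne b l with rfl | hb
    · simp [Matrix.mul_apply, ha, Ne.symm ha]
    · simp [ha, hb, Ne.symm ha, Ne.symm hb]


private lemma exists_sl_entries_ne_zero (n : ℕ) (hn : 2 ≤ n) :
    ∃ a : Matrix (Fin n) (Fin n) ℂ, a.det = 1 ∧ ∀ i j, a i j ≠ 0 := by
  set J : Matrix (Fin n) (Fin n) ℂ := Matrix.of (fun _ _ => 1) with hJ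
  have hJJ : J * J = (n : ℂ) • J := by
    ext i j
    simp [hJ, Matrix.mul_apply]
  have hne : (n : ℂ) + 1 ≠ 0 := by
    have : ((n : ℂ) + 1) = ((n + 1 : ℕ) : ℂ) := by push_cast; ring
    rw [this]
    exact Nat.cast_ne_zero.2 (Nat.succ_ne_zero n)
  set u : Matrix (Fin n) (Fin n) ℂ := 1 + J with hu
  set w : Matrix (Fin n) (Fin n) ℂ := 1 - ((n : ℂ) + 1)⁻¹ • J with hw
  have huw : u * w = 1 := by
    have h1 : u * w = 1 + (1 - ((n:ℂ)+1)⁻¹ * ((n:ℂ)+1)) • J := by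
      rw [hu, hw, add_mul, mul_sub, mul_sub, mul_smul_comm, mul_smul_comm, hJJ, smul_smul,
        one_mul, mul_one]
      simp only [one_mul, mul_one]
      module
    rw [h1, inv_mul_cancel₀ hne, sub_self, zero_smul, add_zero]
  have hdetu : u.det ≠ 0 := by
    have := congrArg Matrix.det huw
    rw [Matrix.det_mul, Matrix.det_one] at this
    exact left_ne_zero_of_mul_eq_one this
  obtain ⟨lam, hlam⟩ := IsAlgClosed.exists_pow_nat_eq (k := ℂ) (u.det)⁻¹ (by omega : 0 < n)
  have hlam0 : lam ≠ 0 := by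
    intro h
    rw [h, zero_pow (by omega : n ≠ 0)] at hlam
    exact inv_ne_zero hdetu hlam.symm
  refine ⟨lam • u, ?_, ?_⟩
  · rw [Matrix.det_smul, Fintype.card_fin, hlam, inv_mul_cancel₀ hdetu]
  · intro i j
    have hu' : u i j ≠ 0 := by
      rw [hu]
      rcases eq_or_ne i j with rfl | h
      · simp only [hu, Matrix.add_apply, Matrix.one_apply_eq, hJ, Matrix.of_apply]
        norm_num
      · simp [hJ, Matrix.one_apply, h]
    simpa using mul_ne_zero hlam0 hu'


private lemma stdBasis_diag_mem_span' (n : ℕ) (hn : 2 ≤ n) (i : Fin n) :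
    Matrix.single i i (1:ℂ) ∈ Submodule.span ℂ
      {m : Matrix (Fin n) (Fin n) ℂ | ∃ d : Matrix.SpecialLinearGroup (Fin n) ℂ,
        (∀ p q : Fin n, p ≠ q → d.val p q = 0) ∧ m = d.val} := by
  have : Nontrivial (Fin n) := ⟨⟨⟨0, by omega⟩, ⟨1, by omega⟩, by simp [Fin.ext_iff]⟩⟩
  obtain ⟨j, hj⟩ := exists_ne i
  set Δ := Submodule.span ℂ
      {m : Matrix (Fin n) (Fin n) ℂ | ∃ d : Matrix.SpecialLinearGroup (Fin n) ℂ,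
        (∀ p q : Fin n, p ≠ q → d.val p q = 0) ∧ m = d.val} with hΔ
  have key : ∀ t : ℂ, t ≠ 0 →
      Matrix.diagonal (fun k => (if k = i then t else 1) * (if k = j then t⁻¹ else 1)) ∈ Δ := by
    intro t ht
    have hdet : (Matrix.diagonal
        (fun k => (if k = i then t else 1) * (if k = j then t⁻¹ else 1))).det = 1 := by
      rw [Matrix.det_diagonal, Finset.prod_mul_distrib]
      rw [Finset.prod_ite_eq' Finset.univ i (fun _ => t),
        Finset.prod_ite_eq' Finset.univ j (fun _ => t⁻¹)]
      simp [mul_inv_cancel₀ ht]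
    refine Submodule.subset_span ⟨⟨_, hdet⟩, fun p q hpq => ?_, rfl⟩
    exact Matrix.diagonal_apply_ne _ hpq
  have hone : (1 : Matrix (Fin n) (Fin n) ℂ) ∈ Δ :=
    Submodule.subset_span ⟨1, fun p q hpq => Matrix.one_apply_ne hpq, rfl⟩
  have h2 := key 2 two_ne_zero
  have hh := key 2⁻¹ (by norm_num)
  have hid : Matrix.single i i (1:ℂ) =
      (4/3 : ℂ) • Matrix.diagonal (fun k => (if k = i then (2:ℂ) else 1) * (if k = j then (2:ℂ)⁻¹ else 1))
      + (2/3 : ℂ) • Matrix.diagonal (fun k => (if k = i then (2:ℂ)⁻¹ else 1) * (if k = j then ((2:ℂ)⁻¹)⁻¹ else 1))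
      - (2 : ℂ) • (1 : Matrix (Fin n) (Fin n) ℂ) := by
    ext p q
    rcases eq_or_ne p q with rfl | hpq
    · simp only [Matrix.sub_apply, Matrix.add_apply, Matrix.smul_apply, Matrix.diagonal_apply_eq,
        Matrix.one_apply_eq, smul_eq_mul]
      rcases eq_or_ne p i with rfl | hpi
      · simp [hj.symm, Matrix.single_apply_same]
        norm_num
      · rcases eq_or_ne p j with rfl | hpj
        · simp [hj, hpi, Matrix.single_apply_of_row_ne (Ne.symm hpi)]
          norm_num
        · simp [hpi, hpj, Matrix.single_apply_of_row_ne (Ne.symm hpi)]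
          norm_num
    · have hne : ¬(i = p ∧ i = q) := by rintro ⟨rfl, rfl⟩; exact hpq rfl
      simp [Matrix.diagonal_apply_ne _ hpq, Matrix.one_apply_ne hpq,
        Matrix.single_apply_of_ne (h := hne)]
  rw [hid]
  exact Δ.sub_mem (Δ.add_mem (Δ.smul_mem _ h2) (Δ.smul_mem _ hh)) (Δ.smul_mem _ hone)

private lemma span_eq_top_aux (n : ℕ) (hn : 2 ≤ n)
    (g aSL : Matrix.SpecialLinearGroup (Fin n) ℂ)
    (ha : ∀ i j, aSL.val i j ≠ 0)
    (S' : Submodule ℂ (Matrix (Fin n) (Fin n) ℂ))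
    (hgen : ∀ d₁ d₂ d₃ : Matrix.SpecialLinearGroup (Fin n) ℂ,
      (∀ p q : Fin n, p ≠ q → d₁.val p q = 0) →
      (∀ p q : Fin n, p ≠ q → d₂.val p q = 0) →
      (∀ p q : Fin n, p ≠ q → d₃.val p q = 0) →
      g.val * d₁.val * aSL.val * d₂.val * aSL.val * d₃.val *
        ((aSL * aSL)⁻¹ : Matrix.SpecialLinearGroup (Fin n) ℂ).val *
        ((g⁻¹ : Matrix.SpecialLinearGroup (Fin n) ℂ)).val ∈ S') :
    S' = ⊤ := by
  classical
  set a : Matrix (Fin n) (Fin n) ℂ := aSL.val with hadef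
  set gv : Matrix (Fin n) (Fin n) ℂ := g.val with hgvdef
  set gi : Matrix (Fin n) (Fin n) ℂ :=
    ((g⁻¹ : Matrix.SpecialLinearGroup (Fin n) ℂ)).val with hgidef
  set B : Matrix (Fin n) (Fin n) ℂ :=
    ((aSL * aSL)⁻¹ : Matrix.SpecialLinearGroup (Fin n) ℂ).val with hBdef
  set C : Matrix (Fin n) (Fin n) ℂ :=
    ((aSL * aSL : Matrix.SpecialLinearGroup (Fin n) ℂ)).val with hCdef
  have hgvgi : gv * gi = 1 := by
    rw [hgvdef, hgidef, ← Matrix.SpecialLinearGroup.coe_mul, mul_inv_cancel,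
      Matrix.SpecialLinearGroup.coe_one]
  have hCB : C * B = 1 := by
    rw [hCdef, hBdef, ← Matrix.SpecialLinearGroup.coe_mul, mul_inv_cancel,
      Matrix.SpecialLinearGroup.coe_one]
  -- trilinear extension step
  have step : ∀ P Q : Matrix (Fin n) (Fin n) ℂ,
      (∀ d : Matrix.SpecialLinearGroup (Fin n) ℂ,
        (∀ p q : Fin n, p ≠ q → d.val p q = 0) → P * d.val * Q ∈ S') →
      ∀ i : Fin n, P * Matrix.single i i 1 * Q ∈ S' := by
    intro P Q hPQ i
    have hle : Submodule.span ℂ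
        {m : Matrix (Fin n) (Fin n) ℂ | ∃ d : Matrix.SpecialLinearGroup (Fin n) ℂ,
          (∀ p q : Fin n, p ≠ q → d.val p q = 0) ∧ m = d.val}
        ≤ S'.comap ((LinearMap.mulLeft ℂ P).comp (LinearMap.mulRight ℂ Q)) := by
      rw [Submodule.span_le]
      rintro m ⟨d, hd, rfl⟩
      simp only [Set.mem_setOf_eq, SetLike.mem_coe, Submodule.mem_comap, LinearMap.coe_comp,
        Function.comp_apply, LinearMap.mulLeft_apply, LinearMap.mulRight_apply]
      simpa only [mul_assoc] using hPQ d hd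
    have := hle (stdBasis_diag_mem_span' n hn i)
    simp only [Submodule.mem_comap, LinearMap.coe_comp, Function.comp_apply,
      LinearMap.mulLeft_apply, LinearMap.mulRight_apply] at this
    simpa only [mul_assoc] using this
  have h3 : ∀ d₁ d₂ : Matrix.SpecialLinearGroup (Fin n) ℂ,
      (∀ p q : Fin n, p ≠ q → d₁.val p q = 0) →
      (∀ p q : Fin n, p ≠ q → d₂.val p q = 0) → ∀ k : Fin n,
      gv * d₁.val * a * d₂.val * a * Matrix.single k k 1 * B * gi ∈ S' := by
    intro d₁ d₂ hd₁ hd₂ k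
    have := step (gv * d₁.val * a * d₂.val * a) (B * gi)
      (fun d hd => by simpa only [mul_assoc] using hgen d₁ d₂ d hd₁ hd₂ hd) k
    simpa only [mul_assoc] using this
  have h2 : ∀ d₁ : Matrix.SpecialLinearGroup (Fin n) ℂ,
      (∀ p q : Fin n, p ≠ q → d₁.val p q = 0) → ∀ j k : Fin n,
      gv * d₁.val * a * Matrix.single j j 1 * a * Matrix.single k k 1 * B * gi ∈ S' := by
    intro d₁ hd₁ j k
    have := step (gv * d₁.val * a) (a * Matrix.single k k 1 * B * gi)
      (fun d hd => by simpa only [mul_assoc] using h3 d₁ d hd₁ hd k) j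
    simpa only [mul_assoc] using this
  have h1 : ∀ i j k : Fin n,
      gv * Matrix.single i i 1 * a * Matrix.single j j 1 * a * Matrix.single k k 1 * B * gi
        ∈ S' := by
    intro i j k
    have := step gv (a * Matrix.single j j 1 * a * Matrix.single k k 1 * B * gi)
      (fun d hd => by simpa only [mul_assoc] using h2 d hd j k) i
    simpa only [mul_assoc] using this
  -- all g E_ik B g⁻¹ lie in S'
  have hEik : ∀ i k : Fin n, gv * (Matrix.single i k 1 * B) * gi ∈ S' := by
    intro i k
    have h := h1 i i k
    have e1 : Matrix.single i i (1:ℂ) * a * Matrix.single i i 1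
        = Matrix.single i i (a i i) := by
      rw [sbm_mul_sbm, one_mul, mul_one]
    have e2 : Matrix.single i i (a i i) * a * Matrix.single k k (1:ℂ)
        = Matrix.single i k (a i i * a i k) := by
      rw [sbm_mul_sbm, mul_one]
    have hc0 : a i i * a i k ≠ 0 := mul_ne_zero (ha i i) (ha i k)
    have e5 : Matrix.single i i (1:ℂ) * a * Matrix.single i i 1 * a * Matrix.single k k 1
        = Matrix.single i k (a i i * a i k) := by
      rw [e1, e2]
    have hrw : gv * Matrix.single i i 1 * a * Matrix.single i i 1 * a * Matrix.single k k 1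
          * B * gi = (a i i * a i k) • (gv * (Matrix.single i k 1 * B) * gi) := by
      calc gv * Matrix.single i i 1 * a * Matrix.single i i 1 * a * Matrix.single k k 1
            * B * gi
          = gv * (Matrix.single i i 1 * a * Matrix.single i i 1 * a * Matrix.single k k 1)
            * B * gi := by simp only [mul_assoc]
        _ = gv * Matrix.single i k (a i i * a i k) * B * gi := by rw [e5]
        _ = gv * ((a i i * a i k) • Matrix.single i k (1:ℂ)) * B * gi := by
            rw [smul_single, smul_eq_mul, mul_one]
        _ = (a i i * a i k) • (gv * (Matrix.single i k 1 * B) * gi) := by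
            simp only [mul_smul_comm, smul_mul_assoc, mul_assoc]
    rw [hrw] at h
    have := S'.smul_mem (a i i * a i k)⁻¹ h
    rwa [smul_smul, inv_mul_cancel₀ hc0, one_smul] at this
  -- conclude
  rw [eq_top_iff]
  intro M _
  have htop : ∀ m : Matrix (Fin n) (Fin n) ℂ, gv * m * (B * gi) ∈ S' := by
    intro m
    have hm : m = ∑ i : Fin n, ∑ j : Fin n, (m i j) • Matrix.single i j (1:ℂ) := by
      conv_lhs => rw [matrix_eq_sum_single m]
      refine Finset.sum_congr rfl fun i _ => Finset.sum_congr rfl fun j _ => ?_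
      rw [smul_single, smul_eq_mul, mul_one]
    have hmem : m ∈ S'.comap ((LinearMap.mulLeft ℂ gv).comp (LinearMap.mulRight ℂ (B * gi))) := by
      rw [hm]
      refine Submodule.sum_mem _ fun i _ => Submodule.sum_mem _ fun j _ =>
        Submodule.smul_mem _ _ ?_
      simp only [Submodule.mem_comap, LinearMap.coe_comp, Function.comp_apply,
        LinearMap.mulLeft_apply, LinearMap.mulRight_apply]
      simpa only [mul_assoc] using hEik i j
    simp only [Submodule.mem_comap, LinearMap.coe_comp, Function.comp_apply,
      LinearMap.mulLeft_apply, LinearMap.mulRight_apply] at hmem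
    simpa only [mul_assoc] using hmem
  have hMN : gv * (gi * M * gv * C) * (B * gi) = M := by
    simp only [mul_assoc]
    rw [show C * (B * gi) = gi from by rw [← mul_assoc, hCB, one_mul]]
    rw [show gv * gi = (1 : Matrix (Fin n) (Fin n) ℂ) from hgvgi, mul_one]
    rw [← mul_assoc, hgvgi, one_mul]
  rw [← hMN]
  exact htop _

/-- Let `n ≥ 2` and let `T = g D g⁻¹` be a maximal torus of `SL_n(ℂ)`,
where `D` is the subgroup of diagonal matrices of determinant `1`. Then there are
`α₁, α₂ ∈ SL_n(ℂ)` such that `T · (α₁ T α₁⁻¹) · (α₂ T α₂⁻¹)` spans `Mat_n(ℂ)`. -/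
theorem torus_triple_product_spans (n : ℕ) (hn : 2 ≤ n)
    (g : Matrix.SpecialLinearGroup (Fin n) ℂ)
    (T : Set (Matrix.SpecialLinearGroup (Fin n) ℂ))
    (hT : T = {x | ∃ d : Matrix.SpecialLinearGroup (Fin n) ℂ,
      (∀ i j : Fin n, i ≠ j → d.val i j = 0) ∧ x = g * d * g⁻¹}) :
    ∃ α₁ α₂ : Matrix.SpecialLinearGroup (Fin n) ℂ,
      Submodule.span ℂ
        ((fun m : Matrix.SpecialLinearGroup (Fin n) ℂ => m.val) ''
          {x | ∃ t₁ ∈ T, ∃ t₂ ∈ T, ∃ t₃ ∈ T,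
            x = t₁ * (α₁ * t₂ * α₁⁻¹) * (α₂ * t₃ * α₂⁻¹)}) =
      (⊤ : Submodule ℂ (Matrix (Fin n) (Fin n) ℂ)) := by
  classical
  subst hT
  obtain ⟨a, hdeta, ha⟩ := exists_sl_entries_ne_zero n hn
  set aSL : Matrix.SpecialLinearGroup (Fin n) ℂ := ⟨a, hdeta⟩ with haSL
  refine ⟨g * aSL * g⁻¹, g * (aSL * aSL) * g⁻¹, ?_⟩
  apply span_eq_top_aux n hn g aSL (fun i j => ha i j)
  intro d₁ d₂ d₃ hd₁ hd₂ hd₃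
  apply Submodule.subset_span
  refine ⟨g * d₁ * aSL * d₂ * aSL * d₃ * (aSL * aSL)⁻¹ * g⁻¹,
    ⟨g * d₁ * g⁻¹, ⟨d₁, hd₁, rfl⟩, g * d₂ * g⁻¹, ⟨d₂, hd₂, rfl⟩,
      g * d₃ * g⁻¹, ⟨d₃, hd₃, rfl⟩, by group⟩, ?_⟩
  simp only [Matrix.SpecialLinearGroup.coe_mul]
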